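/- For every real t, the perimeter of the poristic triangle satisfies ‖P₁(t) − P₂(t)‖ + ‖P₂(t) − P₃(t)‖ + ‖P₃(t) − P₁(t)‖ = (3R² − 4dR cos t + d²)·√(3R² + 2dR cos t − d²)/(R·√(R² − 2dR cos t + d²)), where ‖·‖ is the Euclidean norm on ℝ². -/

import Mathlib

noncomputable section

/-- Inradius determined by Euler's relation: `r = (R² − d²)/(2R)`. -/
def rIn (R d : ℝ) : ℝ := (R ^ 2 - d ^ 2) / (2 * R)

/-- `ω = √(R² − (d cos t + r)²)`. -/
def om (R d t : ℝ) : ℝ := Real.sqrt (R ^ 2 - (d * Real.cos t + rIn R d) ^ 2)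

/-- Vertices `P₁(t), P₂(t), P₃(t)` of the poristic triangle
(circumcircle centered at `X₃ = (d,0)` with radius `R`,
incircle centered at `X₁ = (2d,0)` with radius `r`). -/
def Pv (R d t : ℝ) : Fin 3 → ℝ × ℝ :=
  ![(Real.cos t * (d * Real.cos t + rIn R d) - om R d t * Real.sin t + d,
     (d * Real.cos t + rIn R d) * Real.sin t + om R d t * Real.cos t),
    (Real.cos t * (d * Real.cos t + rIn R d) + om R d t * Real.sin t + d,
     (d * Real.cos t + rIn R d) * Real.sin t - om R d t * Real.cos t),
    (R * (2 * d * R - (R ^ 2 + d ^ 2) * Real.cos t) /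
       (R ^ 2 - 2 * d * R * Real.cos t + d ^ 2) + d,
     R * (d ^ 2 - R ^ 2) * Real.sin t /
       (R ^ 2 - 2 * d * R * Real.cos t + d ^ 2))]

/-- Coefficient of `x` in the excentral sideline `ℓᵢ'(t)`. -/
def lineA (R d t : ℝ) : Fin 3 → ℝ :=
  ![(d * Real.sin t - om R d t) * Real.sin t - rIn R d * Real.cos t,
    (d * Real.sin t + om R d t) * Real.sin t - rIn R d * Real.cos t,
    R * Real.cos t - d]

/-- Coefficient of `y` in the excentral sideline `ℓᵢ'(t)`. -/
def lineB (R d t : ℝ) : Fin 3 → ℝ :=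
  ![-((d * Real.cos t + rIn R d) * Real.sin t - om R d t * Real.cos t),
    -((d * Real.cos t + rIn R d) * Real.sin t + om R d t * Real.cos t),
    R * Real.sin t]

/-- Constant coefficient in the excentral sideline `ℓᵢ'(t)`. -/
def lineC (R d t : ℝ) : Fin 3 → ℝ :=
  ![R ^ 2 - d ^ 2, R ^ 2 - d ^ 2, -(2 * d * R * Real.cos t) + R ^ 2 + d ^ 2]

/-- Euclidean norm on `ℝ²`. -/
def ptNorm (p : ℝ × ℝ) : ℝ := Real.sqrt (p.1 ^ 2 + p.2 ^ 2)

set_option maxHeartbeats 4000000 in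
/-- perimeter of the poristic triangle. -/
theorem poristic_perimeter (R d : ℝ) (hd : 0 < d) (hdR : d < R) (t : ℝ) :
    ptNorm (Pv R d t 0 - Pv R d t 1) + ptNorm (Pv R d t 1 - Pv R d t 2)
      + ptNorm (Pv R d t 2 - Pv R d t 0)
      = (3 * R ^ 2 - 4 * d * R * Real.cos t + d ^ 2)
          * Real.sqrt (3 * R ^ 2 + 2 * d * R * Real.cos t - d ^ 2)
          / (R * Real.sqrt (R ^ 2 - 2 * d * R * Real.cos t + d ^ 2)) := by
  have hR : (0:ℝ) < R := hd.trans hdR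
  have hsc : Real.sin t ^ 2 + Real.cos t ^ 2 = 1 := Real.sin_sq_add_cos_sq t
  have hc1 : Real.cos t ≤ 1 := Real.cos_le_one t
  have hc1' : -1 ≤ Real.cos t := Real.neg_one_le_cos t
  have hQ : 0 < (R ^ 2 - 2 * d * R * Real.cos t + d ^ 2) := by
    nlinarith [mul_pos (sub_pos.mpr hdR) (sub_pos.mpr hdR), mul_pos hd hR]
  have hE : 0 < (3 * R ^ 2 + 2 * d * R * Real.cos t - d ^ 2) := by
    nlinarith [mul_pos (show (0:ℝ) < 3 * R + d by linarith) (sub_pos.mpr hdR), mul_pos hd hR]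
  have hw0 : 0 ≤ om R d t := Real.sqrt_nonneg _
  have hrad : R ^ 2 - (d * Real.cos t + rIn R d) ^ 2 = (R ^ 2 - 2 * d * R * Real.cos t + d ^ 2) * (3 * R ^ 2 + 2 * d * R * Real.cos t - d ^ 2) / (4 * R ^ 2) := by
    rw [rIn]; field_simp; ring
  have h4 : 4 * R ^ 2 * (om R d t) ^ 2 = (R ^ 2 - 2 * d * R * Real.cos t + d ^ 2) * (3 * R ^ 2 + 2 * d * R * Real.cos t - d ^ 2) := by
    rw [om, Real.sq_sqrt (by rw [hrad]; positivity), hrad]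
    field_simp
  have hsq2 : (Real.sqrt (R ^ 2 - 2 * d * R * Real.cos t + d ^ 2)) ^ 2 = (R ^ 2 - 2 * d * R * Real.cos t + d ^ 2) := Real.sq_sqrt hQ.le
  have hse2 : (Real.sqrt (3 * R ^ 2 + 2 * d * R * Real.cos t - d ^ 2)) ^ 2 = (3 * R ^ 2 + 2 * d * R * Real.cos t - d ^ 2) := Real.sq_sqrt hE.le
  have hsq0 : 0 < Real.sqrt (R ^ 2 - 2 * d * R * Real.cos t + d ^ 2) := Real.sqrt_pos.mpr hQ
  have hse0 : 0 < Real.sqrt (3 * R ^ 2 + 2 * d * R * Real.cos t - d ^ 2) := Real.sqrt_pos.mpr hE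
  have h2Rw : 2 * R * om R d t = Real.sqrt (R ^ 2 - 2 * d * R * Real.cos t + d ^ 2) * Real.sqrt (3 * R ^ 2 + 2 * d * R * Real.cos t - d ^ 2) := by
    have h1 : (2 * R * om R d t) ^ 2 = (Real.sqrt (R ^ 2 - 2 * d * R * Real.cos t + d ^ 2) * Real.sqrt (3 * R ^ 2 + 2 * d * R * Real.cos t - d ^ 2)) ^ 2 := by
      rw [mul_pow (Real.sqrt (R ^ 2 - 2 * d * R * Real.cos t + d ^ 2)) (Real.sqrt (3 * R ^ 2 + 2 * d * R * Real.cos t - d ^ 2)), hsq2, hse2]; linear_combination h4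
    calc 2 * R * om R d t = Real.sqrt ((2 * R * om R d t) ^ 2) := (Real.sqrt_sq (by positivity)).symm
      _ = Real.sqrt ((Real.sqrt (R ^ 2 - 2 * d * R * Real.cos t + d ^ 2) * Real.sqrt (3 * R ^ 2 + 2 * d * R * Real.cos t - d ^ 2)) ^ 2) := by rw [h1]
      _ = Real.sqrt (R ^ 2 - 2 * d * R * Real.cos t + d ^ 2) * Real.sqrt (3 * R ^ 2 + 2 * d * R * Real.cos t - d ^ 2) := Real.sqrt_sq (by positivity)
  have hRdc : 0 < R - d * Real.cos t := by
    nlinarith [mul_le_mul_of_nonneg_left hc1 hd.le]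
  have hid : (Real.sqrt (3 * R ^ 2 + 2 * d * R * Real.cos t - d ^ 2) * (R - d * Real.cos t)) ^ 2 - (d * Real.sin t * Real.sqrt (R ^ 2 - 2 * d * R * Real.cos t + d ^ 2)) ^ 2
      = (R ^ 2 - d ^ 2) * (3 * R ^ 2 - 4 * R * d * Real.cos t + d ^ 2) := by
    linear_combination ((R - d * Real.cos t) ^ 2) * hse2 + (-(d ^ 2 * Real.sin t ^ 2)) * hsq2 + (-(d ^ 2 * (R ^ 2 - 2 * d * R * Real.cos t + d ^ 2))) * hsc
  have hGpos : 0 < (R ^ 2 - d ^ 2) * (3 * R ^ 2 - 4 * R * d * Real.cos t + d ^ 2) := by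
    apply mul_pos (by nlinarith)
    nlinarith [mul_pos (show (0:ℝ) < 3 * R - d by linarith) (sub_pos.mpr hdR), mul_pos hd hR]
  have hT2 : (d * Real.sin t * Real.sqrt (R ^ 2 - 2 * d * R * Real.cos t + d ^ 2)) ^ 2 ≤ (Real.sqrt (3 * R ^ 2 + 2 * d * R * Real.cos t - d ^ 2) * (R - d * Real.cos t)) ^ 2 := by linarith [hid, hGpos]
  have hT : 0 ≤ (Real.sqrt (3 * R ^ 2 + 2 * d * R * Real.cos t - d ^ 2) * (R - d * Real.cos t) - d * Real.sin t * Real.sqrt (R ^ 2 - 2 * d * R * Real.cos t + d ^ 2)) := by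
    nlinarith [hT2, mul_nonneg hse0.le hRdc.le,
      sq_nonneg (Real.sqrt (3 * R ^ 2 + 2 * d * R * Real.cos t - d ^ 2) * (R - d * Real.cos t) + d * Real.sin t * Real.sqrt (R ^ 2 - 2 * d * R * Real.cos t + d ^ 2)), sq_nonneg (Real.sqrt (3 * R ^ 2 + 2 * d * R * Real.cos t - d ^ 2) * (R - d * Real.cos t) - d * Real.sin t * Real.sqrt (R ^ 2 - 2 * d * R * Real.cos t + d ^ 2))]
  have hT' : 0 ≤ (Real.sqrt (3 * R ^ 2 + 2 * d * R * Real.cos t - d ^ 2) * (R - d * Real.cos t) + d * Real.sin t * Real.sqrt (R ^ 2 - 2 * d * R * Real.cos t + d ^ 2)) := by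
    nlinarith [hT2, mul_nonneg hse0.le hRdc.le,
      sq_nonneg (Real.sqrt (3 * R ^ 2 + 2 * d * R * Real.cos t - d ^ 2) * (R - d * Real.cos t) + d * Real.sin t * Real.sqrt (R ^ 2 - 2 * d * R * Real.cos t + d ^ 2)), sq_nonneg (Real.sqrt (3 * R ^ 2 + 2 * d * R * Real.cos t - d ^ 2) * (R - d * Real.cos t) - d * Real.sin t * Real.sqrt (R ^ 2 - 2 * d * R * Real.cos t + d ^ 2))]
  have ptpair : ∀ x y : ℝ, ptNorm (x, y) = Real.sqrt (x ^ 2 + y ^ 2) := fun x y => rfl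
  have p01 : Pv R d t 0 - Pv R d t 1 = (-(2 * om R d t * Real.sin t), 2 * om R d t * Real.cos t) := by
    simp only [Pv, Matrix.cons_val_zero, Matrix.cons_val_one, Matrix.head_cons,
      Prod.mk_sub_mk, Prod.mk.injEq]
    constructor <;> ring
  have p12 : Pv R d t 1 - Pv R d t 2 = (((R ^ 2 - 2 * d * R * Real.cos t + d ^ 2) * (Real.cos t * (2 * d * R * Real.cos t + R ^ 2 - d ^ 2) + Real.sin t * (2 * R * om R d t)) - 2 * R ^ 2 * (2 * d * R - (R ^ 2 + d ^ 2) * Real.cos t)) / (2 * R * (R ^ 2 - 2 * d * R * Real.cos t + d ^ 2)), ((R ^ 2 - 2 * d * R * Real.cos t + d ^ 2) * ((2 * d * R * Real.cos t + R ^ 2 - d ^ 2) * Real.sin t - (2 * R * om R d t) * Real.cos t) - 2 * R ^ 2 * (d ^ 2 - R ^ 2) * Real.sin t) / (2 * R * (R ^ 2 - 2 * d * R * Real.cos t + d ^ 2))) := by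
    have hQ' : R ^ 2 - 2 * d * R * Real.cos t + d ^ 2 ≠ 0 := hQ.ne'
    simp only [Pv, rIn, Matrix.cons_val_zero, Matrix.cons_val_one, Matrix.head_cons, Matrix.cons_val_two,
      Matrix.tail_cons, Prod.mk_sub_mk, Prod.mk.injEq]
    generalize hQg : R ^ 2 - 2 * d * R * Real.cos t + d ^ 2 = Q at *
    constructor <;> (field_simp; rw [← hQg]; ring)
  have p20 : Pv R d t 2 - Pv R d t 0 = ((2 * R ^ 2 * (2 * d * R - (R ^ 2 + d ^ 2) * Real.cos t) - (R ^ 2 - 2 * d * R * Real.cos t + d ^ 2) * (Real.cos t * (2 * d * R * Real.cos t + R ^ 2 - d ^ 2) - Real.sin t * (2 * R * om R d t))) / (2 * R * (R ^ 2 - 2 * d * R * Real.cos t + d ^ 2)), (2 * R ^ 2 * (d ^ 2 - R ^ 2) * Real.sin t - (R ^ 2 - 2 * d * R * Real.cos t + d ^ 2) * ((2 * d * R * Real.cos t + R ^ 2 - d ^ 2) * Real.sin t + (2 * R * om R d t) * Real.cos t)) / (2 * R * (R ^ 2 - 2 * d * R * Real.cos t + d ^ 2))) := by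
    have hQ' : R ^ 2 - 2 * d * R * Real.cos t + d ^ 2 ≠ 0 := hQ.ne'
    simp only [Pv, rIn, Matrix.cons_val_zero, Matrix.cons_val_one, Matrix.head_cons,
      Matrix.cons_val_two, Matrix.tail_cons, Prod.mk_sub_mk, Prod.mk.injEq]
    generalize hQg : R ^ 2 - 2 * d * R * Real.cos t + d ^ 2 = Q at *
    constructor <;> (field_simp; rw [← hQg]; ring)
  have n1 : ptNorm (Pv R d t 0 - Pv R d t 1) = Real.sqrt (R ^ 2 - 2 * d * R * Real.cos t + d ^ 2) * Real.sqrt (3 * R ^ 2 + 2 * d * R * Real.cos t - d ^ 2) / R := by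
    rw [p01, ptpair]
    have e1 : (-(2 * om R d t * Real.sin t)) ^ 2 + (2 * om R d t * Real.cos t) ^ 2 = (2 * om R d t) ^ 2 := by
      linear_combination (4 * (om R d t) ^ 2) * hsc
    rw [e1, Real.sqrt_sq (by positivity), eq_div_iff hR.ne']
    linear_combination h2Rw
  have n2 : ptNorm (Pv R d t 1 - Pv R d t 2) = (Real.sqrt (3 * R ^ 2 + 2 * d * R * Real.cos t - d ^ 2) * (R - d * Real.cos t) - d * Real.sin t * Real.sqrt (R ^ 2 - 2 * d * R * Real.cos t + d ^ 2)) / Real.sqrt (R ^ 2 - 2 * d * R * Real.cos t + d ^ 2) := by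
    rw [p12, ptpair]
    have step1 : ((R ^ 2 - 2 * d * R * Real.cos t + d ^ 2) * (Real.cos t * (2 * d * R * Real.cos t + R ^ 2 - d ^ 2) + Real.sin t * (2 * R * om R d t)) - 2 * R ^ 2 * (2 * d * R - (R ^ 2 + d ^ 2) * Real.cos t)) ^ 2 + ((R ^ 2 - 2 * d * R * Real.cos t + d ^ 2) * ((2 * d * R * Real.cos t + R ^ 2 - d ^ 2) * Real.sin t - (2 * R * om R d t) * Real.cos t) - 2 * R ^ 2 * (d ^ 2 - R ^ 2) * Real.sin t) ^ 2 = (4 * R ^ 2 * (R ^ 2 - 2 * d * R * Real.cos t + d ^ 2) * (3 * R ^ 2 + 2 * d * R * Real.cos t - d ^ 2) * (R - d * Real.cos t) ^ 2 - 8 * R ^ 2 * (R ^ 2 - 2 * d * R * Real.cos t + d ^ 2) * d * Real.sin t * (R - d * Real.cos t) * (2 * R * om R d t) + 4 * R ^ 2 * (R ^ 2 - 2 * d * R * Real.cos t + d ^ 2) ^ 2 * d ^ 2 * Real.sin t ^ 2) := by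
      linear_combination ((R ^ 2 - 2 * d * R * Real.cos t + d ^ 2) ^ 2 * (2 * R * om R d t) ^ 2 + (d ^ 8 - 8 * R * d ^ 7 * Real.cos t + 24 * R ^ 2 * d ^ 6 * Real.cos t ^ 2 - 32 * R ^ 3 * d ^ 5 * Real.cos t ^ 3 - 10 * R ^ 4 * d ^ 4 + 16 * R ^ 4 * d ^ 4 * Real.cos t ^ 4 + 40 * R ^ 5 * d ^ 3 * Real.cos t - 16 * R ^ 6 * d ^ 2 - 24 * R ^ 6 * d ^ 2 * Real.cos t ^ 2 + 9 * R ^ 8)) * hsc + (R ^ 2 - 2 * d * R * Real.cos t + d ^ 2) ^ 2 * h4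
    have step2 : (4 * R ^ 2 * (R ^ 2 - 2 * d * R * Real.cos t + d ^ 2) * (3 * R ^ 2 + 2 * d * R * Real.cos t - d ^ 2) * (R - d * Real.cos t) ^ 2 - 8 * R ^ 2 * (R ^ 2 - 2 * d * R * Real.cos t + d ^ 2) * d * Real.sin t * (R - d * Real.cos t) * (2 * R * om R d t) + 4 * R ^ 2 * (R ^ 2 - 2 * d * R * Real.cos t + d ^ 2) ^ 2 * d ^ 2 * Real.sin t ^ 2) = (2 * R * Real.sqrt (R ^ 2 - 2 * d * R * Real.cos t + d ^ 2) * (Real.sqrt (3 * R ^ 2 + 2 * d * R * Real.cos t - d ^ 2) * (R - d * Real.cos t) - d * Real.sin t * Real.sqrt (R ^ 2 - 2 * d * R * Real.cos t + d ^ 2))) ^ 2 := by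
      linear_combination (-(4 * R ^ 2 * (R - d * Real.cos t) ^ 2 * (R ^ 2 - 2 * d * R * Real.cos t + d ^ 2))) * hse2
        + (-(4 * R ^ 2 * (R - d * Real.cos t) ^ 2 * (Real.sqrt (3 * R ^ 2 + 2 * d * R * Real.cos t - d ^ 2)) ^ 2 - 8 * R ^ 2 * d * Real.sin t * (R - d * Real.cos t) * Real.sqrt (R ^ 2 - 2 * d * R * Real.cos t + d ^ 2) * Real.sqrt (3 * R ^ 2 + 2 * d * R * Real.cos t - d ^ 2)
            + 4 * R ^ 2 * d ^ 2 * Real.sin t ^ 2 * ((R ^ 2 - 2 * d * R * Real.cos t + d ^ 2) + (Real.sqrt (R ^ 2 - 2 * d * R * Real.cos t + d ^ 2)) ^ 2))) * hsq2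
        + (-(8 * R ^ 2 * (R ^ 2 - 2 * d * R * Real.cos t + d ^ 2) * d * Real.sin t * (R - d * Real.cos t))) * h2Rw
    have e2 : (((R ^ 2 - 2 * d * R * Real.cos t + d ^ 2) * (Real.cos t * (2 * d * R * Real.cos t + R ^ 2 - d ^ 2) + Real.sin t * (2 * R * om R d t)) - 2 * R ^ 2 * (2 * d * R - (R ^ 2 + d ^ 2) * Real.cos t)) / (2 * R * (R ^ 2 - 2 * d * R * Real.cos t + d ^ 2))) ^ 2 + (((R ^ 2 - 2 * d * R * Real.cos t + d ^ 2) * ((2 * d * R * Real.cos t + R ^ 2 - d ^ 2) * Real.sin t - (2 * R * om R d t) * Real.cos t) - 2 * R ^ 2 * (d ^ 2 - R ^ 2) * Real.sin t) / (2 * R * (R ^ 2 - 2 * d * R * Real.cos t + d ^ 2))) ^ 2 = ((Real.sqrt (3 * R ^ 2 + 2 * d * R * Real.cos t - d ^ 2) * (R - d * Real.cos t) - d * Real.sin t * Real.sqrt (R ^ 2 - 2 * d * R * Real.cos t + d ^ 2)) / Real.sqrt (R ^ 2 - 2 * d * R * Real.cos t + d ^ 2)) ^ 2 := by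
      rw [div_pow, div_pow, ← add_div, step1.trans step2, div_pow,
        div_eq_div_iff (by positivity) (by positivity)]
      linear_combination (4 * R ^ 2 * ((Real.sqrt (3 * R ^ 2 + 2 * d * R * Real.cos t - d ^ 2) * (R - d * Real.cos t) - d * Real.sin t * Real.sqrt (R ^ 2 - 2 * d * R * Real.cos t + d ^ 2))) ^ 2 * ((Real.sqrt (R ^ 2 - 2 * d * R * Real.cos t + d ^ 2)) ^ 2 + (R ^ 2 - 2 * d * R * Real.cos t + d ^ 2))) * hsq2
    rw [e2, Real.sqrt_sq (div_nonneg hT hsq0.le)]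
  have n3 : ptNorm (Pv R d t 2 - Pv R d t 0) = (Real.sqrt (3 * R ^ 2 + 2 * d * R * Real.cos t - d ^ 2) * (R - d * Real.cos t) + d * Real.sin t * Real.sqrt (R ^ 2 - 2 * d * R * Real.cos t + d ^ 2)) / Real.sqrt (R ^ 2 - 2 * d * R * Real.cos t + d ^ 2) := by
    rw [p20, ptpair]
    have step1 : (2 * R ^ 2 * (2 * d * R - (R ^ 2 + d ^ 2) * Real.cos t) - (R ^ 2 - 2 * d * R * Real.cos t + d ^ 2) * (Real.cos t * (2 * d * R * Real.cos t + R ^ 2 - d ^ 2) - Real.sin t * (2 * R * om R d t))) ^ 2 + (2 * R ^ 2 * (d ^ 2 - R ^ 2) * Real.sin t - (R ^ 2 - 2 * d * R * Real.cos t + d ^ 2) * ((2 * d * R * Real.cos t + R ^ 2 - d ^ 2) * Real.sin t + (2 * R * om R d t) * Real.cos t)) ^ 2 = (4 * R ^ 2 * (R ^ 2 - 2 * d * R * Real.cos t + d ^ 2) * (3 * R ^ 2 + 2 * d * R * Real.cos t - d ^ 2) * (R - d * Real.cos t) ^ 2 + 8 * R ^ 2 * (R ^ 2 - 2 * d * R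 * Real.cos t + d ^ 2) * d * Real.sin t * (R - d * Real.cos t) * (2 * R * om R d t) + 4 * R ^ 2 * (R ^ 2 - 2 * d * R * Real.cos t + d ^ 2) ^ 2 * d ^ 2 * Real.sin t ^ 2) := by
      linear_combination ((R ^ 2 - 2 * d * R * Real.cos t + d ^ 2) ^ 2 * (2 * R * om R d t) ^ 2 + (d ^ 8 - 8 * R * d ^ 7 * Real.cos t + 24 * R ^ 2 * d ^ 6 * Real.cos t ^ 2 - 32 * R ^ 3 * d ^ 5 * Real.cos t ^ 3 - 10 * R ^ 4 * d ^ 4 + 16 * R ^ 4 * d ^ 4 * Real.cos t ^ 4 + 40 * R ^ 5 * d ^ 3 * Real.cos t - 16 * R ^ 6 * d ^ 2 - 24 * R ^ 6 * d ^ 2 * Real.cos t ^ 2 + 9 * R ^ 8)) * hsc + (R ^ 2 - 2 * d * R * Real.cos t + d ^ 2) ^ 2 * h4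
    have step2 : (4 * R ^ 2 * (R ^ 2 - 2 * d * R * Real.cos t + d ^ 2) * (3 * R ^ 2 + 2 * d * R * Real.cos t - d ^ 2) * (R - d * Real.cos t) ^ 2 + 8 * R ^ 2 * (R ^ 2 - 2 * d * R * Real.cos t + d ^ 2) * d * Real.sin t * (R - d * Real.cos t) * (2 * R * om R d t) + 4 * R ^ 2 * (R ^ 2 - 2 * d * R * Real.cos t + d ^ 2) ^ 2 * d ^ 2 * Real.sin t ^ 2) = (2 * R * Real.sqrt (R ^ 2 - 2 * d * R * Real.cos t + d ^ 2) * (Real.sqrt (3 * R ^ 2 + 2 * d * R * Real.cos t - d ^ 2) * (R - d * Real.cos t) + d * Real.sin t * Real.sqrt (R ^ 2 - 2 * d * R * Real.cos t + d ^ 2))) ^ 2 := by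
      linear_combination (-(4 * R ^ 2 * (R - d * Real.cos t) ^ 2 * (R ^ 2 - 2 * d * R * Real.cos t + d ^ 2))) * hse2
        + (-(4 * R ^ 2 * (R - d * Real.cos t) ^ 2 * (Real.sqrt (3 * R ^ 2 + 2 * d * R * Real.cos t - d ^ 2)) ^ 2 + 8 * R ^ 2 * d * Real.sin t * (R - d * Real.cos t) * Real.sqrt (R ^ 2 - 2 * d * R * Real.cos t + d ^ 2) * Real.sqrt (3 * R ^ 2 + 2 * d * R * Real.cos t - d ^ 2)
            + 4 * R ^ 2 * d ^ 2 * Real.sin t ^ 2 * ((R ^ 2 - 2 * d * R * Real.cos t + d ^ 2) + (Real.sqrt (R ^ 2 - 2 * d * R * Real.cos t + d ^ 2)) ^ 2))) * hsq2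
        + ((8 * R ^ 2 * (R ^ 2 - 2 * d * R * Real.cos t + d ^ 2) * d * Real.sin t * (R - d * Real.cos t))) * h2Rw
    have e2 : ((2 * R ^ 2 * (2 * d * R - (R ^ 2 + d ^ 2) * Real.cos t) - (R ^ 2 - 2 * d * R * Real.cos t + d ^ 2) * (Real.cos t * (2 * d * R * Real.cos t + R ^ 2 - d ^ 2) - Real.sin t * (2 * R * om R d t))) / (2 * R * (R ^ 2 - 2 * d * R * Real.cos t + d ^ 2))) ^ 2 + ((2 * R ^ 2 * (d ^ 2 - R ^ 2) * Real.sin t - (R ^ 2 - 2 * d * R * Real.cos t + d ^ 2) * ((2 * d * R * Real.cos t + R ^ 2 - d ^ 2) * Real.sin t + (2 * R * om R d t) * Real.cos t)) / (2 * R * (R ^ 2 - 2 * d * R * Real.cos t + d ^ 2))) ^ 2 = ((Real.sqrt (3 * R ^ 2 + 2 * d * R * Real.cos t - d ^ 2) * (R - d * Real.cos t) + d * Real.sin t * Real.sqrt (R ^ 2 - 2 * d * R * Real.cos t + d ^ 2)) / Real.sqrt (R ^ 2 - 2 * d * R * Real.cos t + d ^ 2)) ^ 2 := by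
      rw [div_pow, div_pow, ← add_div, step1.trans step2, div_pow,
        div_eq_div_iff (by positivity) (by positivity)]
      linear_combination (4 * R ^ 2 * ((Real.sqrt (3 * R ^ 2 + 2 * d * R * Real.cos t - d ^ 2) * (R - d * Real.cos t) + d * Real.sin t * Real.sqrt (R ^ 2 - 2 * d * R * Real.cos t + d ^ 2))) ^ 2 * ((Real.sqrt (R ^ 2 - 2 * d * R * Real.cos t + d ^ 2)) ^ 2 + (R ^ 2 - 2 * d * R * Real.cos t + d ^ 2))) * hsq2
    rw [e2, Real.sqrt_sq (div_nonneg hT' hsq0.le)]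
  rw [n1, n2, n3, div_add_div _ _ hR.ne' hsq0.ne',
    div_add_div _ _ (mul_ne_zero hR.ne' hsq0.ne') hsq0.ne',
    div_eq_div_iff (by positivity) (by positivity)]
  linear_combination (R * (Real.sqrt (R ^ 2 - 2 * d * R * Real.cos t + d ^ 2)) ^ 2 * Real.sqrt (3 * R ^ 2 + 2 * d * R * Real.cos t - d ^ 2)) * hsq2
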